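/- Let X be a random variable with support N_n = {1,…,n}, n ≥ 3, and p_1 ≥ … ≥ p_n > 0, with binary partition random variables (A_⟨α⟩, ⟨α⟩ ∈ Ω). Fix i with 2 ≤ i ≤ n and let ⟨α⟩ ∈ Ω satisfy H(A_⟨α⟩ | (A_⟨{j}⟩ : i < j ≤ n)) > 0. Then equality H(A_⟨{i}⟩) = H(A_⟨α⟩) holds if and only if A_⟨α⟩ is an indicator random variable detecting some element ℓ ∈ N_n with p_ℓ = p_i. -/

import Mathlib

open scoped BigOperators

/-- Probability of an event under a pmf `μ` on a finite outcome space. -/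
noncomputable def probOf {Ω : Type*} [Fintype Ω] (μ : Ω → ℝ) (E : Set Ω) : ℝ :=
  ∑ ω, E.indicator μ ω

/-- Shannon entropy (in bits) of the random variable `X` on the finite
probability space `(Ω, μ)`. -/
noncomputable def shEntropy {Ω : Type*} {S : Type*} [Fintype Ω] (μ : Ω → ℝ) (X : Ω → S) : ℝ :=
  ∑ ω, μ ω * (- Real.logb 2 (probOf μ {ω' | X ω' = X ω}))

/-- Conditional Shannon entropy `H(Y | X)` (in bits). -/
noncomputable def shCondEntropy {Ω S T : Type*} [Fintype Ω] (μ : Ω → ℝ)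
    (Y : Ω → T) (X : Ω → S) : ℝ :=
  shEntropy μ (fun ω => (X ω, Y ω)) - shEntropy μ X

/-- The support of the random variable `X` (values taken with positive probability). -/
noncomputable def rvSupport {Ω S : Type*} [Fintype Ω] (μ : Ω → ℝ) (X : Ω → S) : Finset S := by
  classical exact (Finset.univ.filter fun ω => 0 < μ ω).image X

/-- `μ` is a probability mass function. -/
def IsPMF {Ω : Type*} [Fintype Ω] (μ : Ω → ℝ) : Prop :=
  (∀ ω, 0 ≤ μ ω) ∧ ∑ ω, μ ω = 1

/-- A polymatroid on the finite ground set `Z`. -/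
def IsPolymatroid {Z : Type*} [DecidableEq Z] (h : Finset Z → ℝ) : Prop :=
  h ∅ = 0 ∧ (∀ A : Finset Z, 0 ≤ h A) ∧ (∀ A B : Finset Z, A ⊆ B → h A ≤ h B) ∧
    ∀ A B : Finset Z, h (A ∩ B) + h (A ∪ B) ≤ h A + h B

/-- The binary partition random variable `A_⟨α⟩` of a random variable on
`Fin n` (the probability space is taken to be `Fin n` itself, with `X` the
identity): `A_⟨α⟩` records whether `X ∈ α` or `X ∈ αᶜ`.  Unordered partitions
`⟨α⟩ = {α, αᶜ}` are represented by the part `α` not containing the first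
element `0` (the paper's convention `1 ∉ α`). -/
def bpVar {n : ℕ} (α : Finset (Fin n)) : Fin n → Bool := fun x => decide (x ∈ α)

lemma probOf_finset {Ω : Type*} [Fintype Ω] [DecidableEq Ω] (μ : Ω → ℝ) (β : Finset Ω) :
    probOf μ ↑β = ∑ x ∈ β, μ x := by
  classical
  unfold probOf
  simp [Set.indicator_apply, Finset.sum_ite_mem]

lemma shEntropy_bpVar {n : ℕ} (p : Fin n → ℝ) (hsum : ∑ i, p i = 1) (α : Finset (Fin n)) :
    shEntropy p (bpVar α) = Real.binEntropy (∑ x ∈ α, p x) / Real.log 2 := by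
  classical
  set s := ∑ x ∈ α, p x with hs
  have hcompl : ∑ x ∈ αᶜ, p x = 1 - s := by
    have h := Finset.sum_add_sum_compl α p
    rw [hsum] at h; linarith
  have key : ∀ ω : Fin n, probOf p {ω' | bpVar α ω' = bpVar α ω}
      = if ω ∈ α then s else 1 - s := by
    intro ω
    by_cases hω : ω ∈ α
    · have hset : {ω' | bpVar α ω' = bpVar α ω} = (↑α : Set (Fin n)) := by
        ext ω'; simp [bpVar, hω]
      rw [hset, if_pos hω, probOf_finset]
    · have hset : {ω' | bpVar α ω' = bpVar α ω} = (↑(αᶜ) : Set (Fin n)) := by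
        ext ω'; simp [bpVar, hω]
      rw [hset, if_neg hω, probOf_finset, hcompl]
  unfold shEntropy
  rw [Finset.sum_congr rfl (fun ω _ => by rw [key ω])]
  have hsplit : ∑ ω : Fin n, p ω * -Real.logb 2 (if ω ∈ α then s else 1 - s)
      = ∑ ω ∈ α, p ω * -Real.logb 2 s + ∑ ω ∈ αᶜ, p ω * -Real.logb 2 (1 - s) := by
    rw [← Finset.sum_add_sum_compl α]
    congr 1
    · exact Finset.sum_congr rfl fun ω hω => by rw [if_pos hω]
    · exact Finset.sum_congr rfl fun ω hω => by rw [if_neg (Finset.mem_compl.mp hω)]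
  rw [hsplit, ← Finset.sum_mul, ← Finset.sum_mul, hcompl, ← hs]
  have hlog2 : Real.log 2 ≠ 0 := (Real.log_pos (by norm_num)).ne'
  simp only [Real.binEntropy, Real.log_inv, Real.logb]
  field_simp

lemma shCondEntropy_comp_eq_zero {Ω S T : Type*} [Fintype Ω] (μ : Ω → ℝ)
    (X : Ω → S) (f : S → T) :
    shCondEntropy μ (fun ω => f (X ω)) X = 0 := by
  unfold shCondEntropy shEntropy
  rw [sub_eq_zero]
  refine Finset.sum_congr rfl fun ω _ => ?_
  have hset : {ω' | (X ω', f (X ω')) = (X ω, f (X ω))} = {ω' | X ω' = X ω} := by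
    ext ω'
    simp only [Set.mem_setOf_eq, Prod.mk.injEq]
    exact ⟨fun h => h.1, fun h => ⟨h, by rw [h]⟩⟩
  rw [hset]

/-- Proposition 1(3): in the setting of Statement 12,
equality `H(A_⟨{i}⟩) = H(A_⟨α⟩)` holds iff `A_⟨α⟩` is an indicator random
variable detecting an element `ℓ` with `p_ℓ = p_i`, i.e. iff `α = {ℓ}` or
`α = {ℓ}ᶜ` for some `ℓ` with `p ℓ = p i`. -/
theorem indicator_entropy_eq_iff {n : ℕ} [NeZero n] (hn : 3 ≤ n)
    (p : Fin n → ℝ) (hp : ∀ i, 0 < p i) (hsum : ∑ i, p i = 1)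
    (hmono : ∀ i j : Fin n, i ≤ j → p j ≤ p i)
    (i : Fin n) (hi : 1 ≤ i.1)
    (α : Finset (Fin n)) (hαne : α.Nonempty) (hα0 : 0 ∉ α)
    (hα : 0 < shCondEntropy p (bpVar α)
        (fun x (j : {j : Fin n // i < j}) => bpVar {j.1} x)) :
    shEntropy p (bpVar {i}) = shEntropy p (bpVar α) ↔
      ∃ ℓ : Fin n, (α = {ℓ} ∨ α = ({ℓ} : Finset (Fin n))ᶜ) ∧ p ℓ = p i := by
  classical
  have log2pos : (0:ℝ) < Real.log 2 := Real.log_pos (by norm_num)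
  set s := ∑ x ∈ α, p x with hs
  have hEi : shEntropy p (bpVar {i}) = Real.binEntropy (p i) / Real.log 2 := by
    rw [shEntropy_bpVar p hsum, Finset.sum_singleton]
  have hEα : shEntropy p (bpVar α) = Real.binEntropy s / Real.log 2 :=
    shEntropy_bpVar p hsum α
  have hcompl : ∑ x ∈ αᶜ, p x = 1 - s := by
    have h := Finset.sum_add_sum_compl α p
    rw [hsum] at h; linarith
  -- s bounds
  have hs_pos : 0 < s := Finset.sum_pos (fun x _ => hp x) hαne
  have h0c : (0 : Fin n) ∈ αᶜ := Finset.mem_compl.mpr hα0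
  have hp0le : p 0 ≤ ∑ x ∈ αᶜ, p x :=
    Finset.single_le_sum (fun x _ => (hp x).le) h0c
  have hs_lt1 : s < 1 := by have := hp 0; linarith [hcompl ▸ hp0le]
  -- p i < 1/2
  have h0i : (0 : Fin n) ≠ i := by
    intro h; rw [← h] at hi; simp at hi
  have hpi0 : p i ≤ p 0 := hmono 0 i (Fin.zero_le i)
  obtain ⟨m, hm⟩ : ∃ m : Fin n, m ∉ ({0, i} : Finset (Fin n)) := by
    by_contra h
    push_neg at h
    have hsub : (Finset.univ : Finset (Fin n)) ⊆ {0, i} := fun m _ => h m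
    have hc := Finset.card_le_card hsub
    have hc2 : ({0, i} : Finset (Fin n)).card ≤ 2 :=
      (Finset.card_insert_le _ _).trans (by simp)
    simp [Finset.card_univ] at hc
    omega
  have hm0 : m ≠ 0 := by intro h; apply hm; simp [h]
  have hmi : m ≠ i := by intro h; apply hm; simp [h]
  have hsum3 : p 0 + p i + p m ≤ 1 := by
    have hsub : ({0, i, m} : Finset (Fin n)) ⊆ Finset.univ := Finset.subset_univ _
    have h3 : ∑ x ∈ ({0, i, m} : Finset (Fin n)), p x = p 0 + p i + p m := by
      rw [Finset.sum_insert (by simp [h0i, Ne.symm hm0]),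
        Finset.sum_insert (by simp [Ne.symm hmi]), Finset.sum_singleton]
      ring
    calc p 0 + p i + p m = ∑ x ∈ ({0, i, m} : Finset (Fin n)), p x := h3.symm
      _ ≤ ∑ x, p x := Finset.sum_le_sum_of_subset_of_nonneg hsub fun x _ _ => (hp x).le
      _ = 1 := hsum
  have hpi_half : p i < 2⁻¹ := by have := hp m; linarith
  constructor
  · intro heq
    -- binEntropy equality
    have hBE : Real.binEntropy (p i) = Real.binEntropy s := by
      rw [hEi, hEα, div_eq_div_iff log2pos.ne' log2pos.ne'] at heq
      exact mul_right_cancel₀ log2pos.ne' heq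
    -- there is k ∈ α with k ≤ i
    obtain ⟨k, hkα, hki⟩ : ∃ k ∈ α, k ≤ i := by
      by_contra h
      push_neg at h
      set X := fun (x : Fin n) (j : {j : Fin n // i < j}) => bpVar {j.1} x with hX
      set f : ({j : Fin n // i < j} → Bool) → Bool :=
        fun g => decide (∃ j, g j = true ∧ j.1 ∈ α) with hf
      have hY : bpVar α = fun x => f (X x) := by
        funext x
        simp only [hf, hX, bpVar]
        rw [decide_eq_decide]
        constructor
        · intro hx
          exact ⟨⟨x, h x hx⟩, by simp, hx⟩
        · rintro ⟨j, hj1, hj2⟩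
          simp only [Finset.mem_singleton, decide_eq_true_eq] at hj1
          rwa [hj1]
      rw [hY] at hα
      rw [shCondEntropy_comp_eq_zero] at hα
      exact lt_irrefl 0 hα
    have hpik : p i ≤ p k := hmono k i hki
    have hpk_le_s : p k ≤ s := Finset.single_le_sum (fun x _ => (hp x).le) hkα
    rcases le_or_gt s 2⁻¹ with hhalf | hhalf
    · have hs_eq : p i = s :=
        Real.binEntropy_strictMonoOn.injOn ⟨(hp i).le, hpi_half.le⟩
          ⟨hs_pos.le, hhalf⟩ hBE
      have hαk : α = {k} := by
        rw [Finset.eq_singleton_iff_unique_mem]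
        refine ⟨hkα, fun m' hm' => ?_⟩
        by_contra hmk
        have hkm : ({k, m'} : Finset (Fin n)) ⊆ α := by
          intro x hx
          simp only [Finset.mem_insert, Finset.mem_singleton] at hx
          rcases hx with rfl | rfl <;> assumption
        have h2 : p k + p m' ≤ s := by
          calc p k + p m' = ∑ x ∈ ({k, m'} : Finset (Fin n)), p x := by
                rw [Finset.sum_insert (by simp [Ne.symm hmk]), Finset.sum_singleton]
            _ ≤ s := Finset.sum_le_sum_of_subset_of_nonneg hkm fun x _ _ => (hp x).le
        have := hp m'
        linarith
      exact ⟨k, Or.inl hαk, by linarith⟩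
    · have h1s_mem : (1 - s) ∈ Set.Icc (0:ℝ) 2⁻¹ := ⟨by linarith, by linarith⟩
      have hBE' : Real.binEntropy (p i) = Real.binEntropy (1 - s) := by
        rw [hBE, Real.binEntropy_one_sub]
      have hs_eq : p i = 1 - s :=
        Real.binEntropy_strictMonoOn.injOn ⟨(hp i).le, hpi_half.le⟩ h1s_mem hBE'
      have hp0eq : p 0 = p i := by linarith [hcompl ▸ hp0le]
      have hαc : αᶜ = {0} := by
        rw [Finset.eq_singleton_iff_unique_mem]
        refine ⟨h0c, fun m' hm' => ?_⟩
        by_contra hmk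
        have hkm : ({(0 : Fin n), m'} : Finset (Fin n)) ⊆ αᶜ := by
          intro x hx
          simp only [Finset.mem_insert, Finset.mem_singleton] at hx
          rcases hx with rfl | rfl <;> assumption
        have h2 : p 0 + p m' ≤ 1 - s := by
          calc p 0 + p m' = ∑ x ∈ ({(0:Fin n), m'} : Finset (Fin n)), p x := by
                rw [Finset.sum_insert (by simp [Ne.symm hmk]), Finset.sum_singleton]
            _ ≤ ∑ x ∈ αᶜ, p x :=
                Finset.sum_le_sum_of_subset_of_nonneg hkm fun x _ _ => (hp x).le
            _ = 1 - s := hcompl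
        have := hp m'
        linarith
      have hαeq : α = ({0} : Finset (Fin n))ᶜ := by
        rw [← hαc, compl_compl]
      exact ⟨0, Or.inr hαeq, hp0eq⟩
  · rintro ⟨ℓ, hℓ | hℓ, hpe⟩
    · rw [hEi, hEα, hs, hℓ, Finset.sum_singleton, hpe]
    · rw [hEi, hEα, hs, hℓ]
      have : ∑ x ∈ ({ℓ} : Finset (Fin n))ᶜ, p x = 1 - p ℓ := by
        have h := Finset.sum_add_sum_compl ({ℓ} : Finset (Fin n)) p
        rw [hsum, Finset.sum_singleton] at h
        linarith
      rw [this, hpe, Real.binEntropy_one_sub]
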